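/- Let n ≥ 1 be an integer and d ∈ ℝ with d ≠ 1 and d ≠ −1. The quasi-homogeneous vector field F_n := (y + d x^{n+1}, (n+1)x^{2n+1} + (n+1)d x^n y) (type t = (1,n+1), degree n) has a nonconstant polynomial first integral if and only if there exist positive integers m₁, m₂ such that d = (m₁ − m₂)/(m₁ + m₂). Moreover, in that case I_M := (y − x^{n+1})^{m₁}(y + x^{n+1})^{m₂} is such a first integral. -/

import Mathlib

open MvPolynomial

/-- `∇I · (P,Q)` for a planar polynomial vector field `(P,Q)`. -/
noncomputable def gradDot (I P Q : MvPolynomial (Fin 2) ℝ) : MvPolynomial (Fin 2) ℝ :=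
  pderiv 0 I * P + pderiv 1 I * Q

namespace B4aux

abbrev A2 := MvPolynomial (Fin 2) ℝ



lemma gradDot_mul (I J P Q : A2) :
    gradDot (I * J) P Q = gradDot I P Q * J + I * gradDot J P Q := by
  unfold gradDot; rw [pderiv_mul, pderiv_mul]; ring

lemma gradDot_pow (I P Q : A2) (m : ℕ) :
    gradDot (I ^ m) P Q = (m : A2) * I ^ (m - 1) * gradDot I P Q := by
  unfold gradDot; rw [pderiv_pow, pderiv_pow]; ring

lemma mul_pderiv_pow (I : A2) (i : Fin 2) (m : ℕ) :
    I * pderiv i (I ^ m) = (m : A2) * I ^ m * pderiv i I := by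
  cases m with
  | zero => simp
  | succ k => rw [pderiv_pow]; simp only [Nat.add_sub_cancel]; ring

lemma X_mul_pderiv_monomial (i : Fin 2) (s : Fin 2 →₀ ℕ) (a : ℝ) :
    X i * pderiv i (monomial s a) = monomial s (a * (s i : ℝ)) := by
  rw [pderiv_monomial]
  by_cases h : s i = 0
  · simp [h]
  · obtain ⟨t, ht⟩ : ∃ t, s i = t + 1 := ⟨s i - 1, by omega⟩
    have hrec : Finsupp.single i 1 + (s - Finsupp.single i (1:ℕ)) = s := by
      ext j
      rw [Finsupp.add_apply, Finsupp.tsub_apply]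
      rcases eq_or_ne j i with rfl | hj
      · simp [ht]; omega
      · simp [Finsupp.single_apply, Ne.symm hj]
    calc X i * monomial (s - Finsupp.single i 1) (a * (s i : ℝ))
        = X i ^ 1 * monomial (s - Finsupp.single i 1) (a * (s i : ℝ)) := by rw [pow_one]
      _ = monomial (Finsupp.single i 1 + (s - Finsupp.single i 1)) (a * (s i : ℝ)) := by
          rw [monomial_single_add]
      _ = monomial s (a * (s i : ℝ)) := by rw [hrec]

def W (n : ℕ) : Fin 2 → ℕ := ![1, n + 1]

lemma weight_eval (n : ℕ) (s : Fin 2 →₀ ℕ) :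
    Finsupp.weight (W n) s = s 0 * 1 + s 1 * (n + 1) := by
  rw [Finsupp.weight_apply, Finsupp.sum_fintype]
  · simp [W, Fin.sum_univ_two, smul_eq_mul]
  · intro i; simp

lemma isWH_pderiv0 {n : ℕ} {p : A2} {m m' : ℕ} (h : IsWeightedHomogeneous (W n) p m)
    (hm : m = m' + 1) :
    IsWeightedHomogeneous (W n) (pderiv 0 p) m' := by
  classical
  rw [← support_sum_monomial_coeff p, map_sum]
  apply IsWeightedHomogeneous.sum
  intro s hs
  rw [pderiv_monomial]
  by_cases h0 : s 0 = 0
  · simp only [h0, Nat.cast_zero, mul_zero, monomial_zero]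
    exact isWeightedHomogeneous_zero _ _ _
  · apply isWeightedHomogeneous_monomial
    have hw := h (mem_support_iff.mp hs)
    rw [weight_eval] at hw ⊢
    obtain ⟨t, ht⟩ : ∃ t, s 0 = t + 1 := ⟨s 0 - 1, by omega⟩
    have e0 : (s - Finsupp.single (0 : Fin 2) (1:ℕ)) 0 = t := by
      rw [Finsupp.tsub_apply, ht]; simp
    have e1 : (s - Finsupp.single (0 : Fin 2) (1:ℕ)) 1 = s 1 := by
      rw [Finsupp.tsub_apply]; simp
    rw [e0, e1]
    rw [ht] at hw
    rw [hm] at hw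
    linarith [hw]

lemma isWH_pderiv1 {n : ℕ} {p : A2} {m m' : ℕ} (h : IsWeightedHomogeneous (W n) p m)
    (hm : m = m' + (n + 1)) :
    IsWeightedHomogeneous (W n) (pderiv 1 p) m' := by
  classical
  rw [← support_sum_monomial_coeff p, map_sum]
  apply IsWeightedHomogeneous.sum
  intro s hs
  rw [pderiv_monomial]
  by_cases h0 : s 1 = 0
  · simp only [h0, Nat.cast_zero, mul_zero, monomial_zero]
    exact isWeightedHomogeneous_zero _ _ _
  · apply isWeightedHomogeneous_monomial
    have hw := h (mem_support_iff.mp hs)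
    rw [weight_eval] at hw ⊢
    obtain ⟨t, ht⟩ : ∃ t, s 1 = t + 1 := ⟨s 1 - 1, by omega⟩
    have e0 : (s - Finsupp.single (1 : Fin 2) (1:ℕ)) 0 = s 0 := by
      rw [Finsupp.tsub_apply]; simp
    have e1 : (s - Finsupp.single (1 : Fin 2) (1:ℕ)) 1 = t := by
      rw [Finsupp.tsub_apply, ht]; simp
    rw [e0, e1]
    rw [ht, add_one_mul] at hw
    rw [hm] at hw
    linarith [hw]

lemma pderiv1_eq_zero_of_lt {n : ℕ} {p : A2} {m : ℕ} (h : IsWeightedHomogeneous (W n) p m)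
    (hm : m < n + 1) : pderiv 1 p = 0 := by
  classical
  rw [← support_sum_monomial_coeff p, map_sum]
  apply Finset.sum_eq_zero
  intro s hs
  rw [pderiv_monomial]
  have hw := h (mem_support_iff.mp hs)
  rw [weight_eval] at hw
  have h1 : s 1 = 0 := by
    by_contra h0
    obtain ⟨t, ht⟩ : ∃ t, s 1 = t + 1 := ⟨s 1 - 1, by omega⟩
    rw [ht, add_one_mul] at hw
    have h2 : n + 1 ≤ m := by
      calc n + 1 ≤ t * (n+1) + (n+1) := Nat.le_add_left _ _
        _ ≤ s 0 * 1 + (t * (n+1) + (n+1)) := Nat.le_add_left _ _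
        _ = m := hw
    omega
  simp [h1]

lemma isWH_X0_pow (n k : ℕ) : IsWeightedHomogeneous (W n) ((X 0 : A2) ^ k) k := by
  rw [X_pow_eq_monomial]
  apply isWeightedHomogeneous_monomial
  rw [weight_eval]
  simp [Finsupp.single_apply]

lemma isWH_X1 (n : ℕ) : IsWeightedHomogeneous (W n) (X 1 : A2) (n + 1) := by
  have := isWeightedHomogeneous_X ℝ (W n) 1
  simpa [W] using this



/-- Euler identity for weighted homogeneous polynomials -/
lemma euler {n : ℕ} {p : A2} {m : ℕ} (hp : IsWeightedHomogeneous (W n) p m) :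
    X 0 * pderiv 0 p + C ((n : ℝ) + 1) * (X 1 * pderiv 1 p) = C (m : ℝ) * p := by
  classical
  conv_lhs => rw [← support_sum_monomial_coeff p]
  conv_rhs => rw [← support_sum_monomial_coeff p]
  rw [map_sum, map_sum, Finset.mul_sum, Finset.mul_sum, Finset.mul_sum, Finset.mul_sum,
    ← Finset.sum_add_distrib]
  apply Finset.sum_congr rfl
  intro s hs
  have hw := hp (mem_support_iff.mp hs)
  rw [weight_eval] at hw
  rw [X_mul_pderiv_monomial, X_mul_pderiv_monomial, C_mul_monomial, C_mul_monomial,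
    ← map_add]
  congr 1
  have : ((m : ℝ)) = (s 0 : ℝ) * 1 + (s 1 : ℝ) * ((n:ℝ) + 1) := by
    rw [← hw]; push_cast; ring
  rw [this]; ring



noncomputable def GD (P Q : A2) : A2 →ₗ[ℝ] A2 where
  toFun I := gradDot I P Q
  map_add' I J := by unfold gradDot; rw [map_add, map_add]; ring
  map_smul' c I := by
    unfold gradDot
    rw [Derivation.map_smul, Derivation.map_smul, smul_eq_C_mul, smul_eq_C_mul,
      smul_eq_C_mul, RingHom.id_apply]
    ring

lemma GD_apply (P Q I : A2) : GD P Q I = gradDot I P Q := rfl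



noncomputable def shear (n : ℕ) (ε : ℝ) : A2 ≃ₐ[ℝ] A2 :=
  AlgEquiv.ofAlgHom (aeval ![X 1 + C ε * X 0 ^ (n+1), X 0]) (aeval ![X 1, X 0 - C ε * X 1 ^ (n+1)])
    (by apply MvPolynomial.algHom_ext; intro i
        fin_cases i <;> simp [Matrix.cons_val_zero, Matrix.cons_val_one])
    (by apply MvPolynomial.algHom_ext; intro i
        fin_cases i <;> simp [Matrix.cons_val_zero, Matrix.cons_val_one])

lemma prime_X0 : Prime (X 0 : A2) := by
  rw [← MulEquiv.prime_iff (MvPolynomial.finSuccEquiv ℝ 1).toRingEquiv.toMulEquiv]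
  have : (MvPolynomial.finSuccEquiv ℝ 1).toRingEquiv.toMulEquiv (X 0 : A2)
      = Polynomial.X := by
    simp [MvPolynomial.finSuccEquiv_X_zero]
  rw [this]
  exact Polynomial.prime_X

lemma prime_shift (n : ℕ) (ε : ℝ) : Prime (X 1 + C ε * X 0 ^ (n+1) : A2) := by
  have h := prime_X0
  rw [← MulEquiv.prime_iff (shear n ε).toRingEquiv.toMulEquiv] at h
  have : (shear n ε).toRingEquiv.toMulEquiv (X 0 : A2) = X 1 + C ε * X 0 ^ (n+1) := by
    simp [shear, AlgEquiv.ofAlgHom]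
  rwa [this] at h


section field
variable (n : ℕ) (d : ℝ)

noncomputable def PP : A2 := X 1 + C d * X 0 ^ (n + 1)
noncomputable def QQ : A2 := C ((n : ℝ) + 1) * X 0 ^ (2 * n + 1) + C (((n : ℝ) + 1) * d) * X 0 ^ n * X 1
noncomputable def uu : A2 := X 1 - X 0 ^ (n + 1)
noncomputable def vv : A2 := X 1 + X 0 ^ (n + 1)

lemma gradDot_uu : gradDot (uu n) (PP n d) (QQ n d)
    = C (((n:ℝ) + 1) * (d - 1)) * X 0 ^ n * uu n := by
  unfold gradDot uu PP QQ
  simp only [map_sub, map_add, pderiv_pow, pderiv_X_self,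
    pderiv_X_of_ne (show (0:Fin 2) ≠ 1 by decide),
    pderiv_X_of_ne (show (1:Fin 2) ≠ 0 by decide),
    Nat.add_sub_cancel, mul_one, mul_zero, sub_zero, zero_sub,
    map_mul, map_one, map_natCast, Nat.cast_add, Nat.cast_one]
  ring

lemma gradDot_vv : gradDot (vv n) (PP n d) (QQ n d)
    = C (((n:ℝ) + 1) * (d + 1)) * X 0 ^ n * vv n := by
  unfold gradDot vv PP QQ
  simp only [map_sub, map_add, pderiv_pow, pderiv_X_self,
    pderiv_X_of_ne (show (0:Fin 2) ≠ 1 by decide),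
    pderiv_X_of_ne (show (1:Fin 2) ≠ 0 by decide),
    Nat.add_sub_cancel, mul_one, mul_zero, add_zero, zero_add,
    map_mul, map_one, map_natCast, Nat.cast_add, Nat.cast_one]
  ring

lemma part2 (m₁ m₂ : ℕ) (hm₁ : 0 < m₁) (hm₂ : 0 < m₂)
    (hd : d = ((m₁ : ℝ) - (m₂ : ℝ)) / ((m₁ : ℝ) + (m₂ : ℝ))) :
    gradDot (uu n ^ m₁ * vv n ^ m₂) (PP n d) (QQ n d) = 0 := by
  have hsum : (m₁ : ℝ) + (m₂ : ℝ) ≠ 0 := by positivity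
  have key : (m₁ : ℝ) * (d - 1) + (m₂ : ℝ) * (d + 1) = 0 := by
    rw [hd]; field_simp; ring
  obtain ⟨a, rfl⟩ : ∃ a, m₁ = a + 1 := ⟨m₁ - 1, (Nat.succ_pred_eq_of_pos hm₁).symm⟩
  obtain ⟨b, rfl⟩ : ∃ b, m₂ = b + 1 := ⟨m₂ - 1, (Nat.succ_pred_eq_of_pos hm₂).symm⟩
  rw [gradDot_mul, gradDot_pow, gradDot_pow, gradDot_uu, gradDot_vv]
  simp only [Nat.add_sub_cancel]
  have expand : (((a:ℝ) + 1) * (d - 1) + ((b:ℝ) + 1) * (d + 1)) = 0 := by push_cast at key; linarith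
  have : C (((a:ℝ) + 1) * (d - 1) + ((b:ℝ) + 1) * (d + 1))
      * (C ((n:ℝ)+1) * X 0 ^ n * (uu n ^ (a+1) * vv n ^ (b+1))) = 0 := by
    rw [expand]; simp
  rw [← this]
  simp only [map_add, map_mul, map_natCast, Nat.cast_add, Nat.cast_one, map_one]
  ring

end field

lemma eq_C_of_isWH_zero {n : ℕ} {p : A2} (h : IsWeightedHomogeneous (W n) p 0) :
    ∃ c : ℝ, p = C c := by
  refine ⟨coeff 0 p, ?_⟩
  ext s
  rw [coeff_C]
  split_ifs with hs
  · rw [← hs]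
  · by_contra hc
    have hw := h hc
    rw [weight_eval] at hw
    have h0 : s 0 = 0 ∧ s 1 = 0 := by
      constructor
      · omega
      · have := Nat.eq_zero_of_add_eq_zero_left hw
        exact Nat.mul_eq_zero.mp this |>.resolve_right (by omega)
    apply hs
    symm; ext j
    fin_cases j
    · exact h0.1
    · exact h0.2

lemma isWH_PP (n : ℕ) (d : ℝ) : IsWeightedHomogeneous (W n) (PP n d) (n + 1) := by
  unfold PP
  apply IsWeightedHomogeneous.add (isWH_X1 n)
  have := (isWeightedHomogeneous_C (W n) d).mul (isWH_X0_pow n (n+1))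
  simpa using this

lemma isWH_QQ (n : ℕ) (d : ℝ) : IsWeightedHomogeneous (W n) (QQ n d) (2 * n + 1) := by
  unfold QQ
  apply IsWeightedHomogeneous.add
  · have := (isWeightedHomogeneous_C (W n) ((n:ℝ)+1)).mul (isWH_X0_pow n (2*n+1))
    simpa using this
  · have := ((isWeightedHomogeneous_C (W n) (((n:ℝ)+1)*d)).mul (isWH_X0_pow n n)).mul (isWH_X1 n)
    have h2 : 0 + n + (n + 1) = 2 * n + 1 := by ring
    rwa [h2] at this

lemma isWH_gradDot {n : ℕ} {d : ℝ} {J : A2} {m : ℕ}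
    (hJ : IsWeightedHomogeneous (W n) J m) (hm : 1 ≤ m) :
    IsWeightedHomogeneous (W n) (gradDot J (PP n d) (QQ n d)) (m + n) := by
  unfold gradDot
  apply IsWeightedHomogeneous.add
  · have h0 := isWH_pderiv0 hJ (show m = (m - 1) + 1 by omega)
    have := h0.mul (isWH_PP n d)
    have h2 : m - 1 + (n + 1) = m + n := by omega
    rwa [h2] at this
  · by_cases hc : n + 1 ≤ m
    · have h1 := isWH_pderiv1 hJ (show m = (m - (n+1)) + (n + 1) by omega)
      have := h1.mul (isWH_QQ n d)
      have h2 : m - (n + 1) + (2 * n + 1) = m + n := by omega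
      rwa [h2] at this
    · rw [pderiv1_eq_zero_of_lt hJ (by omega), zero_mul]
      exact isWeightedHomogeneous_zero _ _ _

lemma exists_WH_integral {n : ℕ} {d : ℝ} {I : A2}
    (hI : ¬ ∃ c : ℝ, I = C c) (hgd : gradDot I (PP n d) (QQ n d) = 0) :
    ∃ (J : A2) (m : ℕ), J ≠ 0 ∧ 1 ≤ m ∧ IsWeightedHomogeneous (W n) J m ∧
      gradDot J (PP n d) (QQ n d) = 0 := by
  classical
  have hI0 : I ≠ 0 := fun h => hI ⟨0, by rw [h, map_zero]⟩
  set m := weightedTotalDegree (W n) I with hm_def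
  have hm : 1 ≤ m := by
    by_contra hm
    have hm0 : weightedTotalDegree (W n) I = 0 := by omega
    exact hI (eq_C_of_isWH_zero
      (isWeightedHomogeneous_zero_iff_weightedTotalDegree_eq_zero.mpr hm0))
  set J := weightedHomogeneousComponent (W n) m I with hJ_def
  have hJh : IsWeightedHomogeneous (W n) J m :=
    weightedHomogeneousComponent_isWeightedHomogeneous m I
  have hJ0 : J ≠ 0 := by
    obtain ⟨s, hs, hsup⟩ := Finset.exists_mem_eq_sup I.support
      (support_nonempty.mpr hI0) (fun s => Finsupp.weight (W n) s)
    have hws : Finsupp.weight (W n) s = m := hsup.symm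
    have : coeff s J = coeff s I := by
      rw [hJ_def, coeff_weightedHomogeneousComponent, if_pos hws]
    intro h
    rw [h, coeff_zero] at this
    exact mem_support_iff.mp hs this.symm
  refine ⟨J, m, hJ0, hm, hJh, ?_⟩
  -- decompose gradDot I into components
  have hfin : (Function.support fun k => weightedHomogeneousComponent (W n) k I).Finite :=
    weightedHomogeneousComponent_finsupp I
  have hfin2 : (Function.support fun k =>
      GD (PP n d) (QQ n d) (weightedHomogeneousComponent (W n) k I)).Finite := by
    apply hfin.subset
    intro k hk
    simp only [Function.mem_support] at hk ⊢
    intro h; apply hk; rw [h, map_zero]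
  have h1 : (0 : A2) = ∑ᶠ k, GD (PP n d) (QQ n d) (weightedHomogeneousComponent (W n) k I) := by
    have h1' := AddMonoidHom.map_finsum (GD (PP n d) (QQ n d)).toAddMonoidHom hfin
    simp only [LinearMap.toAddMonoidHom_coe] at h1'
    rw [← h1', sum_weightedHomogeneousComponent]
    simpa only [GD_apply] using hgd.symm
  have h2 : (0 : A2) = ∑ᶠ k, weightedHomogeneousComponent (W n) (m + n)
      (GD (PP n d) (QQ n d) (weightedHomogeneousComponent (W n) k I)) := by
    calc (0 : A2) = weightedHomogeneousComponent (W n) (m + n) 0 := by rw [map_zero]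
      _ = _ := by
          have h2' := AddMonoidHom.map_finsum
            (weightedHomogeneousComponent (W n) (m + n)).toAddMonoidHom hfin2
          simp only [LinearMap.toAddMonoidHom_coe] at h2'
          rw [h1, h2']
  have h3 : ∀ k, k ≠ m → weightedHomogeneousComponent (W n) (m + n)
      (GD (PP n d) (QQ n d) (weightedHomogeneousComponent (W n) k I)) = 0 := by
    intro k hk
    by_cases hk1 : 1 ≤ k
    · apply IsWeightedHomogeneous.weightedHomogeneousComponent_ne _
        (isWH_gradDot (weightedHomogeneousComponent_isWeightedHomogeneous k I) hk1)
      omega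
    · have hk0 : k = 0 := by omega
      subst hk0
      obtain ⟨c, hc⟩ := eq_C_of_isWH_zero
        (weightedHomogeneousComponent_isWeightedHomogeneous 0 I)
      rw [hc]
      have : GD (PP n d) (QQ n d) (C c) = 0 := by
        rw [GD_apply]; unfold gradDot; rw [pderiv_C, pderiv_C]; ring
      rw [this, map_zero]
  have h4 : (0 : A2) = weightedHomogeneousComponent (W n) (m + n)
      (GD (PP n d) (QQ n d) J) := by
    rw [h2, finsum_eq_single _ m h3]
  have h5 : weightedHomogeneousComponent (W n) (m + n) (GD (PP n d) (QQ n d) J)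
      = GD (PP n d) (QQ n d) J :=
    IsWeightedHomogeneous.weightedHomogeneousComponent_same
      (isWH_gradDot hJh hm)
  rw [← GD_apply]
  rw [h5] at h4
  exact h4.symm

lemma forward {n : ℕ} {d : ℝ} (hd1 : d ≠ 1) (hd2 : d ≠ -1) {I : A2}
    (hI : ¬ ∃ c : ℝ, I = C c) (hgd : gradDot I (PP n d) (QQ n d) = 0) :
    ∃ m₁ m₂ : ℕ, 0 < m₁ ∧ 0 < m₂ ∧
      d = ((m₁ : ℝ) - (m₂ : ℝ)) / ((m₁ : ℝ) + (m₂ : ℝ)) := by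
  obtain ⟨J, m, hJ0, hm, hJh, hJgd⟩ := exists_WH_integral hI hgd
  have he := euler hJh
  have h0 : pderiv 0 J * PP n d + pderiv 1 J * QQ n d = 0 := hJgd
  have key : C ((n:ℝ)+1) * (uu n * vv n) * pderiv 1 J = C (m:ℝ) * PP n d * J := by
    unfold PP QQ at h0
    unfold PP uu vv
    simp only [map_mul, map_add, map_one] at he h0 ⊢
    linear_combination (X 1 + C d * X 0 ^ (n + 1)) * he - X 0 * h0
  have pu : Prime (uu n) := by
    have h := prime_shift n (-1)
    have heq : X 1 + C (-1:ℝ) * X 0 ^ (n+1) = uu n := by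
      unfold uu; rw [map_neg, map_one]; ring
    rwa [heq] at h
  have pv : Prime (vv n) := by
    have h := prime_shift n 1
    have heq : X 1 + C (1:ℝ) * X 0 ^ (n+1) = vv n := by
      unfold vv; rw [map_one]; ring
    rwa [heq] at h
  have huv : ¬ uu n ∣ vv n := by
    rintro ⟨c, hc⟩
    have h1 : eval ![(1:ℝ), 1] (vv n) = 2 := by unfold vv; simp; norm_num
    have h2 : eval ![(1:ℝ), 1] (uu n) = 0 := by unfold uu; simp
    rw [hc, map_mul, h2, zero_mul] at h1
    norm_num at h1
  have hvu : ¬ vv n ∣ uu n := by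
    rintro ⟨c, hc⟩
    have h1 : eval ![(1:ℝ), -1] (uu n) = -2 := by unfold uu; simp; norm_num
    have h2 : eval ![(1:ℝ), -1] (vv n) = 0 := by unfold vv; simp
    rw [hc, map_mul, h2, zero_mul] at h1
    norm_num at h1
  obtain ⟨m₁, I₁, hu1, hJf⟩ := WfDvdMonoid.max_power_factor hJ0 pu.irreducible
  have hI₁0 : I₁ ≠ 0 := by rintro rfl; rw [mul_zero] at hJf; exact hJ0 hJf
  obtain ⟨m₂, H, hv2, hIf⟩ := WfDvdMonoid.max_power_factor hI₁0 pv.irreducible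
  have hJ' : J = uu n ^ m₁ * (vv n ^ m₂ * H) := by rw [hJf, hIf]
  have hH0 : H ≠ 0 := by
    rintro rfl; rw [mul_zero] at hIf; exact hI₁0 hIf
  have huH : ¬ uu n ∣ H := fun h => hu1 (by rw [hIf]; exact Dvd.dvd.mul_left h _)
  have hpu1 : pderiv 1 (uu n) = 1 := by
    unfold uu
    rw [map_sub, pderiv_X_self, pderiv_pow, pderiv_X_of_ne (show (0:Fin 2) ≠ 1 by decide)]
    ring
  have hpv1 : pderiv 1 (vv n) = 1 := by
    unfold vv
    rw [map_add, pderiv_X_self, pderiv_pow, pderiv_X_of_ne (show (0:Fin 2) ≠ 1 by decide)]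
    ring
  have e1 : uu n * pderiv 1 (uu n ^ m₁) = (m₁ : A2) * uu n ^ m₁ := by
    rw [mul_pderiv_pow, hpu1, mul_one]
  have e2 : vv n * pderiv 1 (vv n ^ m₂) = (m₂ : A2) * vv n ^ m₂ := by
    rw [mul_pderiv_pow, hpv1, mul_one]
  have hpd : uu n * vv n * pderiv 1 (uu n ^ m₁ * (vv n ^ m₂ * H))
      = uu n ^ m₁ * vv n ^ m₂ *
        ((m₁:A2) * (vv n * H) + (m₂:A2) * (uu n * H) + uu n * vv n * pderiv 1 H) := by
    rw [pderiv_mul, pderiv_mul]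
    linear_combination (vv n * vv n ^ m₂ * H) * e1 + (uu n * uu n ^ m₁ * H) * e2
  rw [hJ'] at key
  have hkey2 : uu n ^ m₁ * vv n ^ m₂ * (C ((n:ℝ)+1) *
        ((m₁:A2) * (vv n * H) + (m₂:A2) * (uu n * H) + uu n * vv n * pderiv 1 H))
      = uu n ^ m₁ * vv n ^ m₂ * (C (m:ℝ) * PP n d * H) := by
    linear_combination key - C ((n:ℝ)+1) * hpd
  have hcan : uu n ^ m₁ * vv n ^ m₂ ≠ 0 :=
    mul_ne_zero (pow_ne_zero _ pu.ne_zero) (pow_ne_zero _ pv.ne_zero)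
  have EQ := mul_left_cancel₀ hcan hkey2
  have hdvdu : uu n ∣ C ((m:ℝ)*(1+d) - 2*((n:ℝ)+1)*(m₁:ℝ)) * (vv n * H) := by
    refine ⟨2 * C ((n:ℝ)+1) * (vv n * pderiv 1 H)
      - C ((m:ℝ)*(1-d) - 2*((n:ℝ)+1)*(m₂:ℝ)) * H, ?_⟩
    unfold PP at EQ
    unfold uu vv at EQ ⊢
    simp only [map_mul, map_add, map_sub, map_one, map_natCast, map_ofNat] at EQ ⊢
    linear_combination (-2 : A2) * EQ
  have hdvdv : vv n ∣ C ((m:ℝ)*(1-d) - 2*((n:ℝ)+1)*(m₂:ℝ)) * (uu n * H) := by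
    refine ⟨2 * C ((n:ℝ)+1) * ((m₁ : A2) * H) + 2 * C ((n:ℝ)+1) * (uu n * pderiv 1 H)
      - C ((m:ℝ)*(1+d)) * H, ?_⟩
    unfold PP at EQ
    unfold uu vv at EQ ⊢
    simp only [map_mul, map_add, map_sub, map_one, map_natCast, map_ofNat] at EQ ⊢
    linear_combination (-2 : A2) * EQ
  have hβ : (m:ℝ)*(1+d) - 2*((n:ℝ)+1)*(m₁:ℝ) = 0 := by
    by_contra hβ
    have hCu : uu n ∣ C ((m:ℝ)*(1+d) - 2*((n:ℝ)+1)*(m₁:ℝ)) := by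
      rcases (pu.dvd_mul).mp hdvdu with h | h
      · exact h
      · rcases (pu.dvd_mul).mp h with h' | h'
        · exact absurd h' huv
        · exact absurd h' huH
    have hunit : IsUnit (C ((m:ℝ)*(1+d) - 2*((n:ℝ)+1)*(m₁:ℝ)) : A2) :=
      (isUnit_iff_ne_zero.mpr hβ).map C
    exact pu.not_unit (isUnit_of_dvd_unit hCu hunit)
  have hα : (m:ℝ)*(1-d) - 2*((n:ℝ)+1)*(m₂:ℝ) = 0 := by
    by_contra hα
    have hCv : vv n ∣ C ((m:ℝ)*(1-d) - 2*((n:ℝ)+1)*(m₂:ℝ)) := by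
      rcases (pv.dvd_mul).mp hdvdv with h | h
      · exact h
      · rcases (pv.dvd_mul).mp h with h' | h'
        · exact absurd h' hvu
        · exact absurd h' hv2
    have hunit : IsUnit (C ((m:ℝ)*(1-d) - 2*((n:ℝ)+1)*(m₂:ℝ)) : A2) :=
      (isUnit_iff_ne_zero.mpr hα).map C
    exact pv.not_unit (isUnit_of_dvd_unit hCv hunit)
  have hmR : (1:ℝ) ≤ (m:ℝ) := by exact_mod_cast hm
  have hnR : (0:ℝ) < (n:ℝ) + 1 := by positivity
  have hm1 : 0 < m₁ := by
    rcases Nat.eq_zero_or_pos m₁ with h | h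
    · exfalso
      rw [h] at hβ
      simp only [Nat.cast_zero, mul_zero, sub_zero] at hβ
      rcases mul_eq_zero.mp hβ with h' | h'
      · linarith
      · exact hd2 (by linarith)
    · exact h
  have hm2 : 0 < m₂ := by
    rcases Nat.eq_zero_or_pos m₂ with h | h
    · exfalso
      rw [h] at hα
      simp only [Nat.cast_zero, mul_zero, sub_zero] at hα
      rcases mul_eq_zero.mp hα with h' | h'
      · linarith
      · exact hd1 (by linarith)
    · exact h
  refine ⟨m₁, m₂, hm1, hm2, ?_⟩
  have hsum : (m₁:ℝ) + (m₂:ℝ) ≠ 0 := by positivity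
  rw [eq_div_iff hsum]
  have hn2 : (2*((n:ℝ)+1)) ≠ 0 := by positivity
  apply mul_left_cancel₀ hn2
  linear_combination (1-d) * hβ - (1+d) * hα

end B4aux

/-- The quasi-homogeneous vector field
`F_n = (y + d x^{n+1}, (n+1)x^{2n+1} + (n+1)d x^n y)` with `d ≠ ±1` (case B4)
has a nonconstant polynomial first integral if and only if
`d = (m₁ − m₂)/(m₁ + m₂)` for some positive integers `m₁, m₂`; and in that
case `I_M = (y − x^{n+1})^{m₁}(y + x^{n+1})^{m₂}` is such a first integral. -/
theorem caseB4_polynomially_integrable_iff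
    (n : ℕ) (hn : 1 ≤ n) (d : ℝ) (hd1 : d ≠ 1) (hd2 : d ≠ -1) :
    ((∃ I : MvPolynomial (Fin 2) ℝ, (¬ ∃ c : ℝ, I = C c) ∧
        gradDot I (X 1 + C d * X 0 ^ (n + 1))
          (C ((n : ℝ) + 1) * X 0 ^ (2 * n + 1)
            + C (((n : ℝ) + 1) * d) * X 0 ^ n * X 1) = 0) ↔
      ∃ m₁ m₂ : ℕ, 0 < m₁ ∧ 0 < m₂ ∧
        d = ((m₁ : ℝ) - (m₂ : ℝ)) / ((m₁ : ℝ) + (m₂ : ℝ))) ∧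
    (∀ m₁ m₂ : ℕ, 0 < m₁ → 0 < m₂ →
      d = ((m₁ : ℝ) - (m₂ : ℝ)) / ((m₁ : ℝ) + (m₂ : ℝ)) →
      gradDot ((X 1 - X 0 ^ (n + 1)) ^ m₁ * (X 1 + X 0 ^ (n + 1)) ^ m₂)
        (X 1 + C d * X 0 ^ (n + 1))
        (C ((n : ℝ) + 1) * X 0 ^ (2 * n + 1)
          + C (((n : ℝ) + 1) * d) * X 0 ^ n * X 1) = 0) := by
  constructor
  · constructor
    · rintro ⟨I, hI, hgd⟩
      exact B4aux.forward hd1 hd2 hI hgd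
    · rintro ⟨m₁, m₂, h1, h2, h3⟩
      refine ⟨(X 1 - X 0 ^ (n + 1)) ^ m₁ * (X 1 + X 0 ^ (n + 1)) ^ m₂, ?_,
        B4aux.part2 n d m₁ m₂ h1 h2 h3⟩
      rintro ⟨c, hc⟩
      have e1 := congrArg (eval ![(0:ℝ), 1]) hc
      have e2 := congrArg (eval ![(0:ℝ), 0]) hc
      simp only [map_mul, map_pow, map_sub, map_add, eval_X, eval_C,
        Matrix.cons_val_zero, Matrix.cons_val_one, Matrix.head_cons] at e1 e2
      rw [zero_pow (by omega : n + 1 ≠ 0)] at e1 e2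
      norm_num at e1 e2
      rw [zero_pow (by omega : m₁ ≠ 0)] at e2
      rw [zero_mul] at e2
      rw [← e1] at e2
      norm_num at e2
  · intro m₁ m₂ h1 h2 h3
    exact B4aux.part2 n d m₁ m₂ h1 h2 h3
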